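/- For Σ = {1,...,n}, with Σ_{<i} = {1,...,i−1} and Σ_{>i} = {i+1,...,n}, define L_i = (Σ_{<i}* · i · Σ_{<i}* · Σ_{>i})* for 1 ≤ i < n, and L_n = Σ_{<n}* · n · Σ_{<n}* · n. With u_i defined by u_1 = 1, u_i = u_{i-1} i u_{i-1} for 2 ≤ i < n, u_n = u_{n-1} n u_{n-1} n, we have ⋂_{i=1}^n L_i = { u_n }. -/

import Mathlib

/-- The inner words: `u 1 = [1]`, `u (i+1) = u i ++ [i+1] ++ u i`. -/
def uword : ℕ → List ℕ
  | 0 => []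
  | 1 => [1]
  | (i + 2) => uword (i + 1) ++ [i + 2] ++ uword (i + 1)

/-- `u_n = u_{n-1} · n · u_{n-1} · n`. -/
def ufinal (n : ℕ) : List ℕ := uword (n - 1) ++ [n] ++ uword (n - 1) ++ [n]

/-- `w` only uses letters from `Σ_{<i} = {1, …, i-1}`. -/
def overLow (i : ℕ) (w : List ℕ) : Prop := ∀ x ∈ w, 1 ≤ x ∧ x < i

/-- The block language `Σ_{<i}* · i · Σ_{<i}* · Σ_{>i}` (letters `> i` bounded by `n`). -/
def block (n i : ℕ) : Set (List ℕ) :=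
  {w | ∃ p q y, w = p ++ [i] ++ q ++ [y] ∧ overLow i p ∧ overLow i q ∧ i < y ∧ y ≤ n}

/-- `L_i = (Σ_{<i}* i Σ_{<i}* Σ_{>i})*` for `i < n`, and
`L_n = Σ_{<n}* n Σ_{<n}* n`. -/
def Llang (n i : ℕ) : Set (List ℕ) :=
  if i = n then
    {w | ∃ p q, w = p ++ [n] ++ q ++ [n] ∧ overLow n p ∧ overLow n q}
  else
    {w | ∃ us : List (List ℕ), us.flatten = w ∧ ∀ u ∈ us, u ∈ block n i}

def bstar (n i : ℕ) : Set (List ℕ) :=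
  {w | ∃ us : List (List ℕ), us.flatten = w ∧ ∀ u ∈ us, u ∈ block n i}

lemma uword_succ (k : ℕ) : uword (k+1) = uword k ++ [k+1] ++ uword k := by
  cases k <;> rfl

lemma uword_mem (k : ℕ) : ∀ x ∈ uword k, 1 ≤ x ∧ x ≤ k := by
  induction k with
  | zero => simp [uword]
  | succ k ih =>
    rw [uword_succ]
    intro x hx
    simp only [List.mem_append, List.mem_singleton] at hx
    rcases hx with (hx | rfl) | hx
    · exact ⟨(ih x hx).1, le_trans (ih x hx).2 (Nat.le_succ k)⟩
    · omega
    · exact ⟨(ih x hx).1, le_trans (ih x hx).2 (Nat.le_succ k)⟩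

lemma bstar_nil {n i : ℕ} : ([] : List ℕ) ∈ bstar n i := ⟨[], rfl, by simp⟩

lemma bstar_append {n i : ℕ} {a b : List ℕ} (ha : a ∈ bstar n i) (hb : b ∈ bstar n i) :
    a ++ b ∈ bstar n i := by
  obtain ⟨us, rfl, hus⟩ := ha
  obtain ⟨vs, rfl, hvs⟩ := hb
  refine ⟨us ++ vs, by simp, ?_⟩
  intro u hu
  rcases List.mem_append.mp hu with h | h
  exacts [hus u h, hvs u h]

lemma bstar_single {n i : ℕ} {u : List ℕ} (h : u ∈ block n i) : u ∈ bstar n i :=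
  ⟨[u], by simp, by simpa using h⟩

/-- `u_k ++ [y]` is in the block-star language, for `1 ≤ i ≤ k < y ≤ n`. -/
lemma uword_mem_bstar {n i : ℕ} (hi : 1 ≤ i) :
    ∀ k, i ≤ k → ∀ y, k < y → y ≤ n → uword k ++ [y] ∈ bstar n i := by
  intro k hk
  induction k, hk using Nat.le_induction with
  | base =>
    intro y hy hyn
    obtain ⟨j, rfl⟩ := Nat.exists_eq_add_of_le hi
    rw [Nat.add_comm, uword_succ]
    refine bstar_single ⟨uword j, uword j, y, by simp, ?_, ?_, by omega, hyn⟩ <;>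
      exact fun x hx => ⟨(uword_mem j x hx).1, by have := (uword_mem j x hx).2; omega⟩
  | succ k hk ih =>
    intro y hy hyn
    rw [uword_succ]
    have h1 : uword k ++ [k+1] ∈ bstar n i := ih (k+1) (Nat.lt_succ_self k) (by omega)
    have h2 : uword k ++ [y] ∈ bstar n i := ih y (by omega) hyn
    have := bstar_append h1 h2
    simpa [List.append_assoc] using this

/-- Splitting a block-star word at a boundary ending with a big letter. -/
lemma bstar_split {n i : ℕ} {a b : List ℕ}
    (h : a ++ b ∈ bstar n i)
    (ha : a = [] ∨ ∃ a₀ z, a = a₀ ++ [z] ∧ i < z) :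
    a ∈ bstar n i ∧ b ∈ bstar n i := by
  obtain ⟨us, hf, hus⟩ := h
  induction us generalizing a b with
  | nil =>
    simp only [List.flatten_nil] at hf
    obtain ⟨rfl, rfl⟩ := (List.append_eq_nil_iff).mp hf.symm
    exact ⟨bstar_nil, bstar_nil⟩
  | cons u rest ih =>
    have hu : u ∈ block n i := hus u List.mem_cons_self
    have hrest : ∀ v ∈ rest, v ∈ block n i := fun v hv => hus v (List.mem_cons_of_mem u hv)
    simp only [List.flatten_cons] at hf
    rcases List.append_eq_append_iff.mp hf with ⟨c, hc1, hc2⟩ | ⟨c, hc1, hc2⟩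
    · -- hc1 : a = u ++ c, hc2 : rest.flatten = c ++ b
      rcases ha with rfl | ⟨a₀, z, ha, hz⟩
      · obtain ⟨rfl, rfl⟩ := List.append_eq_nil_iff.mp hc1.symm
        obtain ⟨p, q, y, hpq, _⟩ := hu
        simp at hpq
      · rcases List.eq_nil_or_concat c with rfl | ⟨c₀, zc, rfl⟩
        · refine ⟨?_, ?_⟩
          · rw [List.append_nil] at hc1; rw [hc1]; exact bstar_single hu
          · rw [List.nil_append] at hc2; exact ⟨rest, hc2, hrest⟩
        · rw [List.concat_eq_append] at hc1 hc2
          have hz' : i < zc := by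
            have heq : a₀ ++ [z] = (u ++ c₀) ++ [zc] := by
              rw [← ha, hc1]; simp [List.append_assoc]
            have := (List.append_inj' heq (by simp)).2
            simp at this; omega
          have hstep := ih (Or.inr ⟨c₀, zc, rfl, hz'⟩) hc2 hrest
          exact ⟨by rw [hc1]; exact bstar_append (bstar_single hu) hstep.1, hstep.2⟩
    · -- hc1 : u = a ++ c, hc2 : b = c ++ rest.flatten
      rcases ha with rfl | ⟨a₀, z, rfl, hz⟩
      · simp only [List.nil_append] at hf
        exact ⟨bstar_nil, ⟨u :: rest, hf, hus⟩⟩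
      · rcases List.eq_nil_or_concat c with rfl | ⟨c₀, zc, rfl⟩
        · rw [List.append_nil] at hc1
          refine ⟨bstar_single (hc1 ▸ hu), ?_⟩
          rw [hc2]; simp only [List.nil_append]
          exact ⟨rest, rfl, hrest⟩
        · exfalso
          rw [List.concat_eq_append] at hc1 hc2
          obtain ⟨p, q, y, hpq, hp, hq, hy, hyn⟩ := hu
          have heq : a₀ ++ [z] ++ (c₀ ++ [zc]) = p ++ [i] ++ q ++ [y] :=
            hc1.symm.trans hpq
          simp only [← List.append_assoc] at heq
          have h2 := (List.append_inj' heq (by simp)).1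
          have hzmem : z ∈ p ++ [i] ++ q := by
            rw [← h2]; simp
          simp only [List.mem_append, List.mem_singleton] at hzmem
          rcases hzmem with (hzp | rfl) | hzq
          · exact absurd (hp z hzp).2 (by omega)
          · omega
          · exact absurd (hq z hzq).2 (by omega)

/-- If `v` only has letters `≤ k` and `v ++ [y] ∈ bstar n k` with `y > k`,
then `v = p ++ [k] ++ q` with `p, q` over `Σ_{<k}`. -/
lemma bstar_one_block {n k : ℕ} {v : List ℕ} {y : ℕ}
    (hv : ∀ x ∈ v, x ≤ k) (hy : k < y)
    (h : v ++ [y] ∈ bstar n k) :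
    ∃ p q, v = p ++ [k] ++ q ∧ overLow k p ∧ overLow k q := by
  obtain ⟨us, hf, hus⟩ := h
  match us with
  | [] => simp at hf
  | [u] =>
    simp only [List.flatten_cons, List.flatten_nil, List.append_nil] at hf
    obtain ⟨p, q, y', hpq, hp, hq, hy', hyn⟩ := hus u (by simp)
    rw [hpq] at hf
    have := (List.append_inj' (by rw [hf] : (p ++ [k] ++ q) ++ [y'] = v ++ [y]) (by simp)).1
    exact ⟨p, q, this.symm, hp, hq⟩
  | u1 :: u2 :: rest =>
    exfalso
    obtain ⟨p, q, y1, hpq, hp, hq, hy1, _⟩ := hus u1 (by simp)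
    obtain ⟨p2, q2, y2, hpq2, _⟩ := hus u2 (by simp)
    simp only [List.flatten_cons] at hf
    -- u1 is a prefix of v since the rest is nonempty
    have hne : (u2 ++ (rest.flatten)).length ≥ 1 := by rw [hpq2]; simp; omega
    have hpre : u1 <+: v := by
      apply List.prefix_of_prefix_length_le (l₃ := v ++ [y])
      · exact ⟨u2 ++ rest.flatten ++ [], by rw [← hf]; simp [List.append_assoc]⟩
      · exact ⟨[y], rfl⟩
      · have : u1.length + (u2 ++ rest.flatten).length = v.length + 1 := by
          rw [← List.length_append, hf]; simp
        omega
    have : y1 ∈ v := hpre.subset (by rw [hpq]; simp)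
    exact absurd (hv y1 this) (by omega)

/-- Key uniqueness lemma. -/
lemma bstar_unique {n : ℕ} :
    ∀ k (v : List ℕ) y, (∀ x ∈ v, 1 ≤ x ∧ x ≤ k) → k < y →
    (∀ i, 1 ≤ i → i ≤ k → v ++ [y] ∈ bstar n i) → v = uword k := by
  intro k
  induction k with
  | zero =>
    intro v y hv _ _
    have : v = [] := by
      cases v with
      | nil => rfl
      | cons a t => exact absurd (hv a (by simp)) (by omega)
    simp [this, uword]
  | succ k ih =>
    intro v y hv hy h
    obtain ⟨p, q, rfl, hp, hq⟩ :=
      bstar_one_block (fun x hx => (hv x hx).2) hy (h (k+1) (by omega) le_rfl)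
    have hsplit : ∀ i, 1 ≤ i → i ≤ k →
        (p ++ [k+1]) ∈ bstar n i ∧ (q ++ [y]) ∈ bstar n i := by
      intro i h1 h2
      apply bstar_split
      · have := h i h1 (by omega)
        simpa [List.append_assoc] using this
      · exact Or.inr ⟨p, k+1, rfl, by omega⟩
    have hpu : p = uword k :=
      ih p (k+1) (fun x hx => ⟨(hp x hx).1, by have := (hp x hx).2; omega⟩)
        (Nat.lt_succ_self k) (fun i h1 h2 => (hsplit i h1 h2).1)
    have hqu : q = uword k :=
      ih q y (fun x hx => ⟨(hq x hx).1, by have := (hq x hx).2; omega⟩)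
        (by omega) (fun i h1 h2 => (hsplit i h1 h2).2)
    rw [hpu, hqu, uword_succ]

theorem inter_Llang_eq_singleton (n : ℕ) (hn : 2 ≤ n) :
    {w : List ℕ | ∀ i, 1 ≤ i → i ≤ n → w ∈ Llang n i} = {ufinal n} := by
  ext w
  simp only [Set.mem_setOf_eq, Set.mem_singleton_iff]
  constructor
  · intro h
    have hln := h n (by omega) le_rfl
    rw [Llang, if_pos rfl] at hln
    obtain ⟨p, q, rfl, hp, hq⟩ := hln
    have hbs : ∀ i, 1 ≤ i → i ≤ n - 1 →
        (p ++ [n]) ∈ bstar n i ∧ (q ++ [n]) ∈ bstar n i := by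
      intro i h1 h2
      have hw := h i h1 (by omega)
      rw [Llang, if_neg (by omega)] at hw
      apply bstar_split
      · show (p ++ [n]) ++ (q ++ [n]) ∈ bstar n i
        have : (p ++ [n]) ++ (q ++ [n]) = p ++ [n] ++ q ++ [n] := by
          simp [List.append_assoc]
        rw [this]; exact hw
      · exact Or.inr ⟨p, n, rfl, by omega⟩
    have hpu : p = uword (n-1) :=
      bstar_unique (n-1) p n
        (fun x hx => ⟨(hp x hx).1, by have := (hp x hx).2; omega⟩)
        (by omega) (fun i h1 h2 => (hbs i h1 h2).1)
    have hqu : q = uword (n-1) :=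
      bstar_unique (n-1) q n
        (fun x hx => ⟨(hq x hx).1, by have := (hq x hx).2; omega⟩)
        (by omega) (fun i h1 h2 => (hbs i h1 h2).2)
    rw [hpu, hqu]; rfl
  · rintro rfl
    intro i h1 h2
    rcases Decidable.em (i = n) with rfl | hne
    · rw [Llang, if_pos rfl]
      refine ⟨uword (i-1), uword (i-1), rfl, ?_, ?_⟩ <;>
        exact fun x hx => ⟨(uword_mem _ x hx).1, by have := (uword_mem _ x hx).2; omega⟩
    · rw [Llang, if_neg hne]
      have hin : i ≤ n - 1 := by omega
      have h1' : uword (n-1) ++ [n] ∈ bstar n i :=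
        uword_mem_bstar h1 (n-1) hin n (by omega) le_rfl
      have := bstar_append h1' h1'
      have heq : (uword (n-1) ++ [n]) ++ (uword (n-1) ++ [n]) = ufinal n := by
        rw [ufinal]; simp [List.append_assoc]
      rw [heq] at this
      exact this
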